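/- Define a_n for n ≥ 0 by a_0 = 1 and a_n = Σ_{j=1}^{n} C(2n-1, 2j-1) · a_{n-j}. Then a_{n-1}/a_n ≤ 1/(2n-1) for all n ≥ 1; in particular a_{n-1}/a_n → 0 as n → ∞. -/

import Mathlib

open Filter

/-- For the hyperoctahedral dimension sequence `a 0 = 1`,
`a n = Σ_{j=1}^n C(2n-1, 2j-1) * a (n-j)`, we have
`a (n-1) / a n ≤ 1 / (2n-1)` for all `n ≥ 1`; in particular
`a (n-1) / a n → 0`. -/
theorem stmt11 (a : ℕ → ℕ) (h0 : a 0 = 1)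
    (hrec : ∀ n, 1 ≤ n →
      a n = ∑ j ∈ Finset.Icc 1 n, Nat.choose (2 * n - 1) (2 * j - 1) * a (n - j)) :
    (∀ n, 1 ≤ n → (a (n - 1) : ℝ) / (a n : ℝ) ≤ 1 / (2 * (n : ℝ) - 1)) ∧
      Tendsto (fun n => (a (n - 1) : ℝ) / (a n : ℝ)) atTop (nhds 0) := by
  -- positivity of a
  have hpos : ∀ n, 0 < a n := by
    intro n
    rcases Nat.eq_zero_or_pos n with h | h
    · simp [h, h0]
    · rw [hrec n h]
      have hmem : n ∈ Finset.Icc 1 n := Finset.mem_Icc.mpr ⟨h, le_rfl⟩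
      have : 0 < Nat.choose (2 * n - 1) (2 * n - 1) * a (n - n) := by
        simp [Nat.choose_self, h0]
      calc 0 < Nat.choose (2 * n - 1) (2 * n - 1) * a (n - n) := this
        _ ≤ _ := Finset.single_le_sum (f := fun j => Nat.choose (2 * n - 1) (2 * j - 1) * a (n - j))
              (fun i _ => Nat.zero_le _) hmem
  -- key inequality
  have hkey : ∀ n, 1 ≤ n → (2 * n - 1) * a (n - 1) ≤ a n := by
    intro n h
    rw [hrec n h]
    have hmem : 1 ∈ Finset.Icc 1 n := Finset.mem_Icc.mpr ⟨le_rfl, h⟩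
    have := Finset.single_le_sum (f := fun j => Nat.choose (2 * n - 1) (2 * j - 1) * a (n - j))
      (fun i _ => Nat.zero_le _) hmem
    simpa [Nat.choose_one_right] using this
  have hratio : ∀ n, 1 ≤ n → (a (n - 1) : ℝ) / (a n : ℝ) ≤ 1 / (2 * (n : ℝ) - 1) := by
    intro n h
    have hn : (1 : ℝ) ≤ (n : ℝ) := by exact_mod_cast h
    have h2 : (0 : ℝ) < 2 * (n : ℝ) - 1 := by linarith
    have ha : (0 : ℝ) < (a n : ℝ) := by exact_mod_cast hpos n
    rw [div_le_div_iff₀ ha h2]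
    have := hkey n h
    have hcast : ((2 * n - 1 : ℕ) : ℝ) = 2 * (n : ℝ) - 1 := by
      have : 1 ≤ 2 * n := by omega
      push_cast [this]
      ring
    have h' : ((2 * n - 1 : ℕ) : ℝ) * (a (n - 1) : ℝ) ≤ (a n : ℝ) := by exact_mod_cast this
    rw [hcast] at h'
    linarith
  refine ⟨hratio, ?_⟩
  have htop : Tendsto (fun n : ℕ => 2 * (n : ℝ) - 1) atTop atTop := by
    apply Filter.tendsto_atTop_add_const_right
    exact (tendsto_natCast_atTop_atTop).const_mul_atTop (by norm_num)
  have hlim : Tendsto (fun n : ℕ => 1 / (2 * (n : ℝ) - 1)) atTop (nhds 0) := by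
    simp only [one_div]; exact htop.inv_tendsto_atTop
  apply tendsto_of_tendsto_of_tendsto_of_le_of_le' tendsto_const_nhds hlim
  · exact Eventually.of_forall fun n => div_nonneg (Nat.cast_nonneg _) (Nat.cast_nonneg _)
  · filter_upwards [eventually_ge_atTop 1] with n hn using hratio n hn
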